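/- For β > 0 define μ_β(z) := (1+β)|z|^β/(1 - |z|^{2(1+β)}) on 𝔻. Then μ_β is a conformal pseudometric on 𝔻 with constant curvature -4 and an isolated zero of order β at 0, and it is maximal among such pseudometrics: every conformal pseudometric λ on 𝔻 with κ_λ ≤ -4 that has a zero of order β at 0 satisfies λ(z) ≤ μ_β(z) for all z ∈ 𝔻. -/

import Mathlib

open Complex Filter MeasureTheory Metric Set Topology

noncomputable section

/-- The open unit disk in `ℂ`. -/
def unitDisk : Set ℂ := {z : ℂ | ‖z‖ < 1}

/-- The Laplacian of a real-valued function on `ℂ ≅ ℝ²`. -/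
def lap (u : ℂ → ℝ) (z : ℂ) : ℝ :=
  fderiv ℝ (fun w => fderiv ℝ u w 1) z 1 +
  fderiv ℝ (fun w => fderiv ℝ u w Complex.I) z Complex.I

/-- The Gauss curvature `κ_λ = -Δ(log λ)/λ²` of a conformal pseudometric `λ(z)|dz|`. -/
def curv (lam : ℂ → ℝ) (z : ℂ) : ℝ :=
  -(lap (fun w => Real.log (lam w)) z) / (lam z) ^ 2

/-- A conformal pseudometric on the unit disk: continuous, nonnegative, and C² where positive. -/
structure IsConfPseudometric (lam : ℂ → ℝ) : Prop where
  cont : ContinuousOn lam unitDisk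
  nonneg : ∀ z ∈ unitDisk, 0 ≤ lam z
  smooth : ContDiffOn ℝ 2 lam {z : ℂ | z ∈ unitDisk ∧ 0 < lam z}

/-- `ξ` is a zero of order `α` of the conformal pseudometric `lam`:
order `0` means `lam ξ ≠ 0`; order `α > 0` means `lim_{z→ξ} lam z/|z-ξ|^α`
exists and is nonzero. -/
def HasZeroOrder (lam : ℂ → ℝ) (ξ : ℂ) (α : ℝ) : Prop :=
  (α = 0 ∧ lam ξ ≠ 0) ∨
  (0 < α ∧ lam ξ = 0 ∧ ∃ L : ℝ, L ≠ 0 ∧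
    Filter.Tendsto (fun z => lam z / ‖z - ξ‖ ^ α)
      (nhdsWithin ξ {ξ}ᶜ) (nhds L))

/-- All zeros of `lam` in the unit disk are isolated. -/
def IsolatedZeros (lam : ℂ → ℝ) : Prop :=
  ∀ ξ ∈ unitDisk, lam ξ = 0 → ∀ᶠ w in nhdsWithin ξ {ξ}ᶜ, lam w ≠ 0

/-- The maximal conformal pseudometric with curvature `-4` and a zero of order `β` at `0`:
`μ_β(z) = (1+β)|z|^β/(1-|z|^{2(1+β)})`. -/
def muBeta (β : ℝ) (z : ℂ) : ℝ :=
  (1 + β) * ‖z‖ ^ β / (1 - ‖z‖ ^ (2 * (1 + β)))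

/-- derivative of normSq -/
def nsD (w : ℂ) : ℂ →L[ℝ] ℝ := (2*w.re) • Complex.reCLM + (2*w.im) • Complex.imCLM

lemma hasFDerivAt_normSq (w : ℂ) : HasFDerivAt Complex.normSq (nsD w) w := by
  have h1 : HasFDerivAt (fun z : ℂ => z.re * z.re + z.im * z.im)
      ((w.re • Complex.reCLM + w.re • Complex.reCLM) +
       (w.im • Complex.imCLM + w.im • Complex.imCLM)) w := by
    exact ((Complex.reCLM.hasFDerivAt.mul Complex.reCLM.hasFDerivAt).add
      (Complex.imCLM.hasFDerivAt.mul Complex.imCLM.hasFDerivAt))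
  have h2 : (fun z : ℂ => z.re * z.re + z.im * z.im) = Complex.normSq := by
    funext z; simp [Complex.normSq_apply]
  rw [h2] at h1
  convert h1 using 1
  ext v <;> simp [nsD] <;> ring
  
lemma nsD_one (w : ℂ) : nsD w 1 = 2 * w.re := by simp [nsD]
lemma nsD_I (w : ℂ) : nsD w Complex.I = 2 * w.im := by simp [nsD]

lemma lap_eq_of_hasFDerivAt {f : ℂ → ℝ} {D : ℂ → ℂ →L[ℝ] ℝ} {z : ℂ}
    {L1 L2 : ℂ →L[ℝ] ℝ}
    (h : ∀ᶠ w in 𝓝 z, HasFDerivAt f (D w) w)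
    (h1 : HasFDerivAt (fun w => D w 1) L1 z)
    (h2 : HasFDerivAt (fun w => D w Complex.I) L2 z) :
    lap f z = L1 1 + L2 Complex.I := by
  have e : (fun w => fderiv ℝ f w) =ᶠ[𝓝 z] D := h.mono fun w hw => hw.fderiv
  have e1 : (fun w => fderiv ℝ f w 1) =ᶠ[𝓝 z] (fun w => D w 1) :=
    e.mono fun w hw => by simp only [hw]
  have e2 : (fun w => fderiv ℝ f w Complex.I) =ᶠ[𝓝 z] (fun w => D w Complex.I) :=
    e.mono fun w hw => by simp only [hw]
  rw [lap, e1.fderiv_eq, e2.fderiv_eq, h1.fderiv, h2.fderiv]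

lemma lap_comp_normSq {G G' : ℝ → ℝ} {g'' : ℝ} {z : ℂ}
    (h1 : ∀ᶠ s in 𝓝 (Complex.normSq z), HasDerivAt G (G' s) s)
    (h2 : HasDerivAt G' g'' (Complex.normSq z)) :
    lap (fun w => G (Complex.normSq w)) z
      = 4 * Complex.normSq z * g'' + 4 * G' (Complex.normSq z) := by
  have hq : ∀ w : ℂ, HasFDerivAt Complex.normSq (nsD w) w := hasFDerivAt_normSq
  have hev : ∀ᶠ w in 𝓝 z, HasFDerivAt (fun w => G (Complex.normSq w))
      (G' (Complex.normSq w) • nsD w) w := by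
    have hc : Tendsto Complex.normSq (𝓝 z) (𝓝 (Complex.normSq z)) :=
      Complex.continuous_normSq.continuousAt
    filter_upwards [hc.eventually h1] with w hw
    exact hw.comp_hasFDerivAt w (hq w)
  -- derivative of w ↦ G' (normSq w)
  have hG' : HasFDerivAt (fun w : ℂ => G' (Complex.normSq w)) (g'' • nsD z) z :=
    h2.comp_hasFDerivAt z (hq z)
  have hre : HasFDerivAt (fun w : ℂ => 2 * w.re) ((2:ℝ) • Complex.reCLM) z := by
    exact (Complex.reCLM.hasFDerivAt (x := z)).const_mul (2:ℝ)
  have him : HasFDerivAt (fun w : ℂ => 2 * w.im) ((2:ℝ) • Complex.imCLM) z := by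
    exact (Complex.imCLM.hasFDerivAt (x := z)).const_mul (2:ℝ)
  have k1 : HasFDerivAt (fun w => (G' (Complex.normSq w) • nsD w) 1)
      (G' (Complex.normSq z) • ((2:ℝ) • Complex.reCLM) + (2*z.re) • (g'' • nsD z)) z := by
    have : (fun w => (G' (Complex.normSq w) • nsD w) 1)
        = fun w : ℂ => G' (Complex.normSq w) * (2 * w.re) := by
      funext w; simp [nsD_one]
    rw [this]; exact hG'.mul hre
  have k2 : HasFDerivAt (fun w => (G' (Complex.normSq w) • nsD w) Complex.I)
      (G' (Complex.normSq z) • ((2:ℝ) • Complex.imCLM) + (2*z.im) • (g'' • nsD z)) z := by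
    have : (fun w => (G' (Complex.normSq w) • nsD w) Complex.I)
        = fun w : ℂ => G' (Complex.normSq w) * (2 * w.im) := by
      funext w; simp [nsD_I]
    rw [this]; exact hG'.mul him
  rw [lap_eq_of_hasFDerivAt hev k1 k2]
  simp [nsD_one, nsD_I, Complex.normSq_apply]
  ring
lemma abs_rpow_eq (z : ℂ) (p : ℝ) :
    ‖z‖ ^ p = Complex.normSq z ^ (p/2) := by
  rw [Complex.norm_def, Real.sqrt_eq_rpow, ← Real.rpow_mul (Complex.normSq_nonneg z)]
  congr 1
  ring

lemma lap_congr {f g : ℂ → ℝ} {z : ℂ} (h : f =ᶠ[𝓝 z] g) : lap f z = lap g z := by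
  have e : (fun w => fderiv ℝ f w) =ᶠ[𝓝 z] (fun w => fderiv ℝ g w) := by
    filter_upwards [h.eventuallyEq_nhds] with w hw using hw.fderiv_eq
  have e1 : (fun w => fderiv ℝ f w 1) =ᶠ[𝓝 z] (fun w => fderiv ℝ g w 1) :=
    e.mono fun w hw => by
      have hw' : fderiv ℝ f w = fderiv ℝ g w := hw
      simp only [hw']
  have e2 : (fun w => fderiv ℝ f w Complex.I) =ᶠ[𝓝 z] (fun w => fderiv ℝ g w Complex.I) :=
    e.mono fun w hw => by
      have hw' : fderiv ℝ f w = fderiv ℝ g w := hw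
      simp only [hw']
  rw [lap, lap, e1.fderiv_eq, e2.fderiv_eq]

def nuF (β r : ℝ) (z : ℂ) : ℝ :=
  (1+β) * ‖z‖ ^ β * r ^ (1+β) / (r ^ (2*(1+β)) - ‖z‖ ^ (2*(1+β)))

lemma nuF_denom_pos {β r : ℝ} (hβ : 0 < β) (hr : 0 < r) {z : ℂ}
    (hzr : ‖z‖ < r) :
    ‖z‖ ^ (2*(1+β)) < r ^ (2*(1+β)) :=
  Real.rpow_lt_rpow (norm_nonneg z) hzr (by linarith)

lemma nuF_pos {β r : ℝ} (hβ : 0 < β) (hr : 0 < r) {z : ℂ} (hz : z ≠ 0)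
    (hzr : ‖z‖ < r) : 0 < nuF β r z := by
  have h1 : 0 < ‖z‖ := norm_pos_iff.mpr hz
  have h2 := nuF_denom_pos hβ hr hzr
  have : 0 < (1+β) * ‖z‖ ^ β * r ^ (1+β) := by
    have := Real.rpow_pos_of_pos h1 β
    have := Real.rpow_pos_of_pos hr (1+β)
    positivity
  exact div_pos this (by linarith)

lemma lap_log_abs {z : ℂ} (hz : z ≠ 0) :
    lap (fun w => Real.log (‖w‖)) z = 0 := by
  have hfe : (fun w => Real.log (‖w‖))
      = fun w => (1/2 : ℝ) * Real.log (Complex.normSq w) := by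
    funext w
    rw [Complex.norm_def, Real.log_sqrt (Complex.normSq_nonneg w)]
    ring
  rw [hfe]
  have hs₀ : 0 < Complex.normSq z := Complex.normSq_pos.mpr hz
  have h1 : ∀ᶠ s in 𝓝 (Complex.normSq z),
      HasDerivAt (fun u => (1/2 : ℝ) * Real.log u) ((fun u => (1/2 : ℝ) * u⁻¹) s) s := by
    filter_upwards [eventually_gt_nhds hs₀] with s hs
    exact (Real.hasDerivAt_log hs.ne').const_mul (1/2 : ℝ)
  have h2 : HasDerivAt (fun u => (1/2 : ℝ) * u⁻¹)
      ((1/2 : ℝ) * (-((Complex.normSq z)^2)⁻¹)) (Complex.normSq z) :=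
    (hasDerivAt_inv hs₀.ne').const_mul (1/2 : ℝ)
  rw [lap_comp_normSq h1 h2]
  field_simp
  ring
lemma nuF_normSq_form {β r : ℝ} (z : ℂ) :
    nuF β r z = (1+β) * Complex.normSq z ^ (β/2) * r ^ (1+β)
      / (r ^ (2*(1+β)) - Complex.normSq z ^ (1+β)) := by
  rw [nuF, abs_rpow_eq z β, abs_rpow_eq z (2*(1+β))]
  norm_num

lemma lap_log_nuF {β r : ℝ} (hβ : 0 < β) (hr : 0 < r) {z : ℂ} (hz : z ≠ 0)
    (hzr : ‖z‖ < r) :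
    lap (fun w => Real.log (nuF β r w)) z = 4 * (nuF β r z)^2 := by
  set R := r ^ (2*(1+β)) with hR
  have hRpos : 0 < R := Real.rpow_pos_of_pos hr _
  have hs₀ : 0 < Complex.normSq z := Complex.normSq_pos.mpr hz
  set s₀ := Complex.normSq z with hs₀def
  have hβ1 : (0:ℝ) < 1 + β := by linarith
  -- key inequality s₀ ^ (1+β) < R
  have hAR : ∀ w : ℂ, ‖w‖ < r → Complex.normSq w ^ (1+β) < R := by
    intro w hw
    have := nuF_denom_pos hβ hr hw
    rwa [abs_rpow_eq w (2*(1+β)), show (2*(1+β))/2 = 1+β by ring] at this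
  have hARz : s₀ ^ (1+β) < R := hAR z hzr
  set G : ℝ → ℝ := fun s => Real.log (1+β) + (β/2) * Real.log s
      + (1+β) * Real.log r - Real.log (R - s^(1+β)) with hG
  set G' : ℝ → ℝ := fun s => β/2 * s⁻¹ + (1+β) * s^β * (R - s^(1+β))⁻¹ with hG'
  -- Step 1: local identification of log ∘ nuF with G ∘ normSq
  have hcongr : (fun w => Real.log (nuF β r w)) =ᶠ[𝓝 z] fun w => G (Complex.normSq w) := by
    have hopen : IsOpen {w : ℂ | w ≠ 0 ∧ ‖w‖ < r} := by
      apply IsOpen.inter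
      · exact isOpen_compl_singleton
      · exact isOpen_lt continuous_norm continuous_const
    filter_upwards [hopen.mem_nhds ⟨hz, hzr⟩] with w hw
    obtain ⟨hw0, hwr⟩ := hw
    have hsw : 0 < Complex.normSq w := Complex.normSq_pos.mpr hw0
    have hdw : 0 < R - Complex.normSq w ^ (1+β) := by
      have := hAR w hwr; linarith
    rw [nuF_normSq_form, hG]
    have h1 : (0:ℝ) < Complex.normSq w ^ (β/2) := Real.rpow_pos_of_pos hsw _
    have h2 : (0:ℝ) < r ^ (1+β) := Real.rpow_pos_of_pos hr _
    rw [Real.log_div (by positivity) (by linarith), Real.log_mul (by positivity) h2.ne',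
        Real.log_mul (by positivity) h1.ne', Real.log_rpow hsw, Real.log_rpow hr]
  rw [lap_congr hcongr]
  -- Step 2: first derivative of G near s₀
  have h1 : ∀ᶠ s in 𝓝 s₀, HasDerivAt G (G' s) s := by
    have hev2 : ∀ᶠ s in 𝓝 s₀, s ^ (1+β) < R :=
      (Real.continuousAt_rpow_const s₀ (1+β) (Or.inl hs₀.ne')).eventually_lt
        continuousAt_const hARz
    filter_upwards [eventually_gt_nhds hs₀, hev2] with s hs hsR
    have hds : 0 < R - s^(1+β) := by linarith
    have a1 : HasDerivAt (fun u : ℝ => Real.log (1+β) + (β/2) * Real.log u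
        + (1+β) * Real.log r) ((β/2) * s⁻¹) s :=
      (((Real.hasDerivAt_log hs.ne').const_mul (β/2)).const_add _).add_const _
    have inner : HasDerivAt (fun u : ℝ => R - u^(1+β)) (-((1+β) * s^(1+β-1))) s :=
      (Real.hasDerivAt_rpow_const (Or.inl hs.ne')).const_sub R
    have a4 : HasDerivAt (fun u : ℝ => Real.log (R - u^(1+β)))
        ((R - s^(1+β))⁻¹ * -((1+β) * s^(1+β-1))) s := by
      simpa [Function.comp_def] using (Real.hasDerivAt_log hds.ne').comp s inner
    have total := a1.sub a4
    rw [hG']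
    refine total.congr_deriv ?_
    rw [show (1:ℝ)+β-1 = β by ring]
    field_simp
    ring
  -- Step 3: second derivative at s₀
  have inner0 : HasDerivAt (fun u : ℝ => R - u^(1+β)) (-((1+β) * s₀^β)) s₀ := by
    have := (Real.hasDerivAt_rpow_const (x := s₀) (p := 1+β) (Or.inl hs₀.ne')).const_sub R
    rwa [show (1:ℝ)+β-1 = β by ring] at this
  have hds₀ : 0 < R - s₀^(1+β) := by linarith
  have binv : HasDerivAt (fun u : ℝ => (R - u^(1+β))⁻¹)
      (((1+β) * s₀^β) / (R - s₀^(1+β))^2) s₀ := by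
    have := inner0.inv hds₀.ne'
    refine this.congr_deriv ?_
    ring
  have bmul : HasDerivAt (fun u : ℝ => (1+β) * u^β)
      ((1+β) * (β * s₀^(β-1))) s₀ :=
    (Real.hasDerivAt_rpow_const (Or.inl hs₀.ne')).const_mul (1+β)
  have bfirst : HasDerivAt (fun u : ℝ => β/2 * u⁻¹) (β/2 * (-(s₀^2)⁻¹)) s₀ :=
    (hasDerivAt_inv hs₀.ne').const_mul (β/2)
  have h2 : HasDerivAt G'
      (β/2 * (-(s₀^2)⁻¹) + ((1+β) * (β * s₀^(β-1)) * (R - s₀^(1+β))⁻¹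
        + (1+β) * s₀^β * (((1+β) * s₀^β) / (R - s₀^(1+β))^2))) s₀ := by
    rw [hG']
    exact bfirst.add ((bmul.mul binv))
  rw [lap_comp_normSq h1 h2]
  -- Step 4: algebra
  rw [nuF_normSq_form, ← hs₀def, ← hR]
  simp only [hG']
  have i1 : s₀ ^ (β-1) = s₀ ^ β / s₀ := by
    rw [Real.rpow_sub hs₀, Real.rpow_one]
  have i2 : s₀ ^ (1+β) = s₀ * s₀ ^ β := by
    rw [Real.rpow_add hs₀, Real.rpow_one]
  have i3 : s₀ ^ (β/2) * s₀ ^ (β/2) = s₀ ^ β := by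
    rw [← Real.rpow_add hs₀]; congr 1; ring
  have i4 : r ^ (1+β) * r ^ (1+β) = R := by
    rw [← Real.rpow_add hr, hR]; congr 1; ring
  have hbpos : 0 < s₀ ^ β := Real.rpow_pos_of_pos hs₀ _
  have hden : 0 < R - s₀ * s₀ ^ β := by rw [← i2]; exact hds₀
  have i3' : (s₀ ^ (β/2))^2 = s₀ ^ β := by rw [pow_two]; exact i3
  have i4' : (r ^ (1+β))^2 = R := by rw [pow_two]; exact i4
  rw [i1, i2, div_pow, mul_pow, mul_pow, i3', i4']
  field_simp
  ring

lemma deriv2_nonpos_of_isLocalMax {g g' : ℝ → ℝ} {q : ℝ}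
    (hg : ∀ᶠ t in 𝓝 (0:ℝ), HasDerivAt g (g' t) t)
    (hg' : HasDerivAt g' q 0) (hmax : IsLocalMax g 0) : q ≤ 0 := by
  by_contra hq
  push_neg at hq
  have hg'0 : g' 0 = 0 := hmax.hasDerivAt_eq_zero hg.self_of_nhds
  have hslope : Tendsto (fun t => g' t / t) (𝓝[>] (0:ℝ)) (𝓝 q) := by
    have h1 := hasDerivAt_iff_tendsto_slope.mp hg'
    have h2 : Tendsto (slope g' 0) (𝓝[>] (0:ℝ)) (𝓝 q) :=
      h1.mono_left (nhdsWithin_mono 0 (fun t ht => ne_of_gt ht))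
    refine h2.congr fun t => ?_
    simp [slope_def_field, hg'0]
  have hpos : ∀ᶠ t in 𝓝 (0:ℝ), t ∈ Ioi (0:ℝ) → 0 < g' t := by
    rw [← eventually_nhdsWithin_iff]
    filter_upwards [hslope.eventually (lt_mem_nhds hq), self_mem_nhdsWithin] with t ht ht0
    have ht0' : (0:ℝ) < t := ht0
    have := mul_pos ht ht0'
    rwa [div_mul_cancel₀] at this
    exact ht0'.ne'
  have hmax' : ∀ᶠ t in 𝓝 (0:ℝ), g t ≤ g 0 := hmax
  obtain ⟨ε, hε, hall⟩ := Metric.eventually_nhds_iff.mp (hg.and (hpos.and hmax'))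
  set c := ε / 2 with hc
  have hc0 : 0 < c := by positivity
  have hmem : ∀ t ∈ Icc (0:ℝ) c, dist t 0 < ε := by
    intro t ht
    rw [Real.dist_eq, sub_zero, _root_.abs_of_nonneg ht.1]
    have := ht.2; simp only [hc] at this ⊢; linarith
  have hsm : StrictMonoOn g (Icc (0:ℝ) c) := by
    apply strictMonoOn_of_deriv_pos (convex_Icc 0 c)
    · intro t ht
      exact ((hall (hmem t ht)).1.continuousAt).continuousWithinAt
    · intro t ht
      rw [interior_Icc] at ht
      rw [(hall (hmem t (Ioo_subset_Icc_self ht))).1.deriv]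
      exact (hall (hmem t (Ioo_subset_Icc_self ht))).2.1 ht.1
  have h1 : g 0 < g c := hsm (by simp [le_of_lt hc0]) (by simp [le_of_lt hc0, le_refl]) hc0
  have h2 : g c ≤ g 0 := (hall (hmem c (by simp [le_of_lt hc0]))).2.2
  linarith

lemma lap_nonpos_of_isLocalMax' {f : ℂ → ℝ} {z : ℂ} (hf : ContDiffAt ℝ 2 f z)
    (hmax : IsLocalMax f z) :
    fderiv ℝ (fun w => fderiv ℝ f w 1) z 1 +
      fderiv ℝ (fun w => fderiv ℝ f w Complex.I) z Complex.I ≤ 0 := by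
  have hD : DifferentiableAt ℝ (fderiv ℝ f) z := by
    have h1 : ContDiffAt ℝ 1 (fderiv ℝ f) z := hf.fderiv_right (by norm_num)
    exact h1.differentiableAt (by norm_num)
  have ev_diff : ∀ᶠ w in 𝓝 z, DifferentiableAt ℝ f w := by
    filter_upwards [hf.eventually (by simp)] with w hw
    exact hw.differentiableAt (by norm_num)
  have key : ∀ v : ℂ, fderiv ℝ (fun w => fderiv ℝ f w v) z v
      = fderiv ℝ (fderiv ℝ f) z v v ∧ fderiv ℝ (fderiv ℝ f) z v v ≤ 0 := by
    intro v
    -- the line t ↦ z + t • v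
    have hl : ∀ t : ℝ, HasDerivAt (fun t : ℝ => z + t • v) v t := by
      intro t
      simpa using ((hasDerivAt_id t).smul_const v).const_add z
    have hlc : Continuous (fun t : ℝ => z + t • v) := by continuity
    have hl0 : z + (0:ℝ) • v = z := by simp
    set g : ℝ → ℝ := fun t => f (z + t • v) with hgdef
    set g' : ℝ → ℝ := fun t => fderiv ℝ f (z + t • v) v with hg'def
    have hg : ∀ᶠ t in 𝓝 (0:ℝ), HasDerivAt g (g' t) t := by
      have hten : Tendsto (fun t : ℝ => z + t • v) (𝓝 0) (𝓝 z) := by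
        simpa using (hlc.tendsto 0)
      filter_upwards [hten.eventually ev_diff] with t ht
      exact ht.hasFDerivAt.comp_hasDerivAt t (hl t)
    -- derivative of g'
    have happ : DifferentiableAt ℝ (fun w => fderiv ℝ f w v) z :=
      hD.clm_apply (differentiableAt_const v)
    have happ_fd : fderiv ℝ (fun w => fderiv ℝ f w v) z
        = (fderiv ℝ (fderiv ℝ f) z).flip v := by
      rw [fderiv_clm_apply hD (differentiableAt_const v)]
      simp
    have hg' : HasDerivAt g' ((fderiv ℝ (fderiv ℝ f) z).flip v v) 0 := by
      have h1 : HasFDerivAt (fun w => fderiv ℝ f w v)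
          (fderiv ℝ (fun w => fderiv ℝ f w v) z) (z + (0:ℝ) • v) := by
        rw [hl0]; exact happ.hasFDerivAt
      have h2 := h1.comp_hasDerivAt 0 (hl 0)
      rw [happ_fd] at h2
      exact h2
    have hmaxg : IsLocalMax g 0 := by
      have hten : Tendsto (fun t : ℝ => z + t • v) (𝓝 0) (𝓝 z) := by
        simpa using (hlc.tendsto 0)
      filter_upwards [hten.eventually hmax] with t ht
      simpa [hgdef, hl0] using ht
    have hq := deriv2_nonpos_of_isLocalMax hg hg' hmaxg
    rw [ContinuousLinearMap.flip_apply] at hq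
    constructor
    · rw [happ_fd, ContinuousLinearMap.flip_apply]
    · exact hq
  have k1 := key 1
  have k2 := key Complex.I
  rw [k1.1, k2.1]
  linarith [k1.2, k2.2]
lemma contDiff_normSq' {n : WithTop ℕ∞} : ContDiff ℝ n Complex.normSq := by
  have h : Complex.normSq = fun z : ℂ => z.re * z.re + z.im * z.im := by
    funext z; exact Complex.normSq_apply z
  rw [h]
  have hre : ContDiff ℝ n fun z : ℂ => z.re := Complex.reCLM.contDiff
  have him : ContDiff ℝ n fun z : ℂ => z.im := Complex.imCLM.contDiff
  exact (hre.mul hre).add (him.mul him)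

lemma contDiffAt_abs_rpow {p : ℝ} {z : ℂ} (hz : z ≠ 0) {n : WithTop ℕ∞} :
    ContDiffAt ℝ n (fun w => ‖w‖ ^ p) z := by
  have h : (fun w => ‖w‖ ^ p) = fun w => Complex.normSq w ^ (p/2) := by
    funext w; exact abs_rpow_eq w p
  rw [h]
  have hs : Complex.normSq z ≠ 0 := (Complex.normSq_pos.mpr hz).ne'
  exact (Real.contDiffAt_rpow_const_of_ne hs).comp z contDiff_normSq'.contDiffAt

lemma contDiffAt_nuF {β r : ℝ} (hβ : 0 < β) (hr : 0 < r) {z : ℂ} (hz : z ≠ 0)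
    (hzr : ‖z‖ < r) {n : WithTop ℕ∞} : ContDiffAt ℝ n (nuF β r) z := by
  have hnum : ContDiffAt ℝ n (fun w => (1+β) * ‖w‖ ^ β * r ^ (1+β)) z :=
    ((contDiffAt_const.mul (contDiffAt_abs_rpow hz)).mul contDiffAt_const)
  have hden : ContDiffAt ℝ n (fun w => r ^ (2*(1+β)) - ‖w‖ ^ (2*(1+β))) z :=
    contDiffAt_const.sub (contDiffAt_abs_rpow hz)
  have hd0 : r ^ (2*(1+β)) - ‖z‖ ^ (2*(1+β)) ≠ 0 := by
    have := nuF_denom_pos hβ hr hzr; linarith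
  exact hnum.div hden hd0

lemma contDiffAt_log_nuF {β r : ℝ} (hβ : 0 < β) (hr : 0 < r) {z : ℂ} (hz : z ≠ 0)
    (hzr : ‖z‖ < r) {n : WithTop ℕ∞} :
    ContDiffAt ℝ n (fun w => Real.log (nuF β r w)) z :=
  (contDiffAt_nuF hβ hr hz hzr).log (nuF_pos hβ hr hz hzr).ne'

lemma contDiffAt_log_abs {z : ℂ} (hz : z ≠ 0) {n : WithTop ℕ∞} :
    ContDiffAt ℝ n (fun w => Real.log (‖w‖)) z := by
  have h : (fun w => Real.log (‖w‖))
      = fun w => (1/2 : ℝ) * Real.log (Complex.normSq w) := by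
    funext w
    rw [Complex.norm_def, Real.log_sqrt (Complex.normSq_nonneg w)]; ring
  rw [h]
  exact contDiffAt_const.mul
    (contDiff_normSq'.contDiffAt.log (Complex.normSq_pos.mpr hz).ne')

lemma lap_combo {f g h : ℂ → ℝ} {δ : ℝ} {z : ℂ}
    (hf : ContDiffAt ℝ 2 f z) (hg : ContDiffAt ℝ 2 g z) (hh : ContDiffAt ℝ 2 h z) :
    lap (fun w => f w - g w + δ * h w) z = lap f z - lap g z + δ * lap h z := by
  have evd : ∀ {u : ℂ → ℝ}, ContDiffAt ℝ 2 u z → ∀ᶠ w in 𝓝 z, DifferentiableAt ℝ u w := by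
    intro u hu
    filter_upwards [hu.eventually (by simp)] with w hw
    exact hw.differentiableAt (by norm_num)
  have hev : ∀ᶠ w in 𝓝 z, HasFDerivAt (fun w => f w - g w + δ * h w)
      (fderiv ℝ f w - fderiv ℝ g w + δ • fderiv ℝ h w) w := by
    filter_upwards [evd hf, evd hg, evd hh] with w h1 h2 h3
    exact (h1.hasFDerivAt.sub h2.hasFDerivAt).add (h3.hasFDerivAt.const_mul δ)
  have hDa : ∀ {u : ℂ → ℝ}, ContDiffAt ℝ 2 u z → ∀ v : ℂ,
      DifferentiableAt ℝ (fun w => fderiv ℝ u w v) z := by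
    intro u hu v
    have h1 : ContDiffAt ℝ 1 (fderiv ℝ u) z := hu.fderiv_right (by norm_num)
    exact (h1.differentiableAt (by norm_num)).clm_apply (differentiableAt_const v)
  have key : ∀ v : ℂ,
      HasFDerivAt (fun w => (fderiv ℝ f w - fderiv ℝ g w + δ • fderiv ℝ h w) v)
        (fderiv ℝ (fun w => fderiv ℝ f w v) z - fderiv ℝ (fun w => fderiv ℝ g w v) z
          + δ • fderiv ℝ (fun w => fderiv ℝ h w v) z) z := by
    intro v
    have e : (fun w => (fderiv ℝ f w - fderiv ℝ g w + δ • fderiv ℝ h w) v)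
        = fun w => fderiv ℝ f w v - fderiv ℝ g w v + δ * fderiv ℝ h w v := by
      funext w; simp
    rw [e]
    exact (((hDa hf v).hasFDerivAt.sub (hDa hg v).hasFDerivAt).add
      (((hDa hh v).hasFDerivAt).const_mul δ))
  have := lap_eq_of_hasFDerivAt hev (key 1) (key Complex.I)
  rw [this, lap, lap, lap]
  simp only [ContinuousLinearMap.add_apply, ContinuousLinearMap.sub_apply,
    ContinuousLinearMap.smul_apply, smul_eq_mul]
  ring

lemma muBeta_eq_nuF (β : ℝ) : muBeta β = nuF β 1 := by
  funext z; rw [muBeta, nuF, Real.one_rpow, Real.one_rpow, mul_one]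
lemma lap_nonpos_of_isLocalMax {f : ℂ → ℝ} {z : ℂ} (hf : ContDiffAt ℝ 2 f z)
    (hmax : IsLocalMax f z) : lap f z ≤ 0 :=
  lap_nonpos_of_isLocalMax' hf hmax

lemma muBeta_zero {β : ℝ} (hβ : 0 < β) : muBeta β 0 = 0 := by
  rw [muBeta]
  simp [Real.zero_rpow hβ.ne']

lemma unitDisk_open : IsOpen unitDisk := isOpen_lt continuous_norm continuous_const

lemma muBeta_denom_pos {β : ℝ} (hβ : 0 < β) {z : ℂ} (hz : z ∈ unitDisk) :
    0 < 1 - ‖z‖ ^ (2*(1+β)) := by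
  have := Real.rpow_lt_one (norm_nonneg z) hz (by linarith : (0:ℝ) < 2*(1+β))
  linarith

lemma muBeta_conf {β : ℝ} (hβ : 0 < β) : IsConfPseudometric (muBeta β) := by
  constructor
  · intro z hz
    apply ContinuousAt.continuousWithinAt
    have hnum : ContinuousAt (fun w : ℂ => (1+β) * ‖w‖ ^ β) z :=
      continuousAt_const.mul
        ((Real.continuousAt_rpow_const _ _ (Or.inr hβ.le)).comp
          continuous_norm.continuousAt)
    have hden : ContinuousAt (fun w : ℂ => 1 - ‖w‖ ^ (2*(1+β))) z :=
      continuousAt_const.sub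
        ((Real.continuousAt_rpow_const _ _ (Or.inr (by linarith : (0:ℝ) ≤ 2*(1+β)))).comp
          continuous_norm.continuousAt)
    exact hnum.div hden (muBeta_denom_pos hβ hz).ne'
  · intro z hz
    apply div_nonneg
    · have := Real.rpow_nonneg (norm_nonneg z) β
      positivity
    · exact (muBeta_denom_pos hβ hz).le
  · intro z hz
    obtain ⟨hz𝔻, hzpos⟩ := hz
    apply ContDiffAt.contDiffWithinAt
    have hz0 : z ≠ 0 := by
      intro h
      rw [h, muBeta_zero hβ] at hzpos
      exact lt_irrefl 0 hzpos
    rw [muBeta_eq_nuF]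
    exact contDiffAt_nuF hβ one_pos hz0 hz𝔻

lemma muBeta_pos_curv {β : ℝ} (hβ : 0 < β) {z : ℂ} (hz : z ∈ unitDisk) (hz0 : z ≠ 0) :
    0 < muBeta β z ∧ curv (muBeta β) z = -4 := by
  have hpos : 0 < muBeta β z := by
    rw [muBeta_eq_nuF]; exact nuF_pos hβ one_pos hz0 hz
  refine ⟨hpos, ?_⟩
  rw [curv, muBeta_eq_nuF, lap_log_nuF hβ one_pos hz0 hz]
  have hne : nuF β 1 z ≠ 0 := by rw [← muBeta_eq_nuF]; exact hpos.ne'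
  field_simp

lemma muBeta_order {β : ℝ} (hβ : 0 < β) : HasZeroOrder (muBeta β) 0 β := by
  refine Or.inr ⟨hβ, muBeta_zero hβ, 1+β, by linarith, ?_⟩
  have h1 : Tendsto (fun z : ℂ => (1+β)/(1 - ‖z‖ ^ (2*(1+β)))) (𝓝 0)
      (𝓝 (1+β)) := by
    have hden : ContinuousAt (fun w : ℂ => 1 - ‖w‖ ^ (2*(1+β))) 0 :=
      continuousAt_const.sub
        ((Real.continuousAt_rpow_const _ _ (Or.inr (by linarith : (0:ℝ) ≤ 2*(1+β)))).comp
          continuous_norm.continuousAt)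
    have hval : (1 : ℝ) - ‖(0:ℂ)‖ ^ (2*(1+β)) = 1 := by
      simp [Real.zero_rpow (by linarith : (2:ℝ)*(1+β) ≠ 0)]
    have hdt : Tendsto (fun w : ℂ => 1 - ‖w‖ ^ (2*(1+β))) (𝓝 0) (𝓝 1) := by
      have := hden.tendsto
      rwa [hval] at this
    have h2 := Filter.Tendsto.div (tendsto_const_nhds (x := (1+β))) hdt one_ne_zero
    rw [div_one] at h2
    exact h2
  refine Tendsto.congr' ?_ (h1.mono_left nhdsWithin_le_nhds)
  have hev : ∀ᶠ w in 𝓝[≠] (0:ℂ), w ≠ 0 ∧ w ∈ unitDisk := by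
    have h3 : ∀ᶠ w in 𝓝 (0:ℂ), w ∈ unitDisk :=
      unitDisk_open.mem_nhds (by simp [unitDisk])
    exact (eventually_nhdsWithin_of_eventually_nhds h3).and self_mem_nhdsWithin |>.mono
      (fun w hw => ⟨hw.2, hw.1⟩)
  filter_upwards [hev] with w hw
  obtain ⟨hw0, hw𝔻⟩ := hw
  have hb : (0:ℝ) < ‖w‖ ^ β := Real.rpow_pos_of_pos (norm_pos_iff.mpr hw0) β
  have hd := muBeta_denom_pos hβ hw𝔻
  rw [sub_zero, muBeta]
  field_simp
lemma curv_le_lap {lam : ℂ → ℝ} {z : ℂ} (hl : 0 < lam z) (h : curv lam z ≤ -4) :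
    4 * lam z ^ 2 ≤ lap (fun w => Real.log (lam w)) z := by
  rw [curv, div_le_iff₀ (by positivity : (0:ℝ) < lam z ^ 2)] at h
  nlinarith [sq_nonneg (lam z)]

lemma maximality {β : ℝ} (hβ : 0 < β) (lam : ℂ → ℝ) (hconf : IsConfPseudometric lam)
    (hcurv : ∀ z ∈ unitDisk, 0 < lam z → curv lam z ≤ -4)
    (hord : HasZeroOrder lam 0 β) :
    ∀ z ∈ unitDisk, lam z ≤ muBeta β z := by
  intro z hz𝔻
  rcases hord with ⟨hb0, _⟩ | ⟨_, hlam0, L, hL, hLlim⟩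
  · exact absurd hb0 hβ.ne'
  by_cases hz0 : z = 0
  · rw [hz0, hlam0, muBeta_zero hβ]
  by_cases hlamneg : lam z ≤ 0
  · exact le_trans hlamneg ((muBeta_conf hβ).nonneg z hz𝔻)
  push_neg at hlamneg
  by_contra hcon
  push_neg at hcon
  have hzabs : 0 < ‖z‖ := norm_pos_iff.mpr hz0
  -- L is positive
  have hL0 : 0 < L := by
    have hev : ∀ᶠ w in 𝓝[≠] (0:ℂ), 0 ≤ lam w / ‖w - 0‖ ^ β := by
      have h3 : ∀ᶠ w in 𝓝 (0:ℂ), w ∈ unitDisk :=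
        unitDisk_open.mem_nhds (by simp [unitDisk])
      filter_upwards [eventually_nhdsWithin_of_eventually_nhds h3] with w hw
      exact div_nonneg (hconf.nonneg w hw) (Real.rpow_nonneg (norm_nonneg _) β)
    have h0 : 0 ≤ L := ge_of_tendsto hLlim hev
    exact lt_of_le_of_ne h0 (Ne.symm hL)
  -- choose the radius r
  obtain ⟨r, hzr, hr1, hnu_lt⟩ : ∃ r : ℝ, ‖z‖ < r ∧ r < 1 ∧ nuF β r z < lam z := by
    have hten : Tendsto (fun t : ℝ => nuF β t z) (𝓝[<] (1:ℝ)) (𝓝 (nuF β 1 z)) := by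
      apply Tendsto.mono_left ?_ nhdsWithin_le_nhds
      have h1 : ContinuousAt (fun t : ℝ => t ^ (1+β)) 1 :=
        Real.continuousAt_rpow_const 1 _ (Or.inl one_ne_zero)
      have h2 : ContinuousAt (fun t : ℝ => t ^ (2*(1+β))) 1 :=
        Real.continuousAt_rpow_const 1 _ (Or.inl one_ne_zero)
      have hdenne : (1:ℝ) ^ (2*(1+β)) - ‖z‖ ^ (2*(1+β)) ≠ 0 := by
        rw [Real.one_rpow]
        exact (muBeta_denom_pos hβ hz𝔻).ne'
      exact ContinuousAt.div (continuousAt_const.mul h1) (h2.sub continuousAt_const) hdenne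
    have hlt : nuF β 1 z < lam z := by rw [← muBeta_eq_nuF]; exact hcon
    have e1 : ∀ᶠ t in 𝓝[<] (1:ℝ), nuF β t z < lam z := hten.eventually_lt_const hlt
    have e2 : ∀ᶠ t in 𝓝[<] (1:ℝ), ‖z‖ < t :=
      eventually_nhdsWithin_of_eventually_nhds (eventually_gt_nhds hz𝔻)
    have e3 : ∀ᶠ t in 𝓝[<] (1:ℝ), t < 1 := eventually_mem_nhdsWithin
    obtain ⟨t, h1, h2, h3⟩ := (e1.and (e2.and e3)).exists
    exact ⟨t, h2, h3, h1⟩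
  have hr0 : 0 < r := lt_trans hzabs hzr
  have hnuz : 0 < nuF β r z := nuF_pos hβ hr0 hz0 hzr
  have hlogz : Real.log (‖z‖) < 0 := Real.log_neg hzabs hz𝔻
  set c₀ : ℝ := Real.log (lam z) - Real.log (nuF β r z) with hc₀def
  have hc₀ : 0 < c₀ := sub_pos.mpr (Real.log_lt_log hnuz hnu_lt)
  set δ : ℝ := c₀ / (2 * (-Real.log (‖z‖))) with hδdef
  have hδ : 0 < δ := div_pos hc₀ (by linarith)
  set F : ℂ → ℝ := fun w => Real.log (lam w) - Real.log (nuF β r w)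
      + δ * Real.log (‖w‖) with hFdef
  have hFz : 0 < F z := by
    have h1 : δ * Real.log (‖z‖) = -(c₀/2) := by
      rw [hδdef]; field_simp [hlogz.ne]
    have h2 : F z = c₀ + δ * Real.log (‖z‖) := by
      simp only [hFdef, hc₀def]
    rw [h2, h1]; linarith
  -- the domain Ω
  set Ω : Set ℂ := {w : ℂ | ‖w‖ < r ∧ w ≠ 0 ∧ 0 < lam w} with hΩdef
  have hposopen : IsOpen {w : ℂ | w ∈ unitDisk ∧ 0 < lam w} := by
    exact hconf.cont.isOpen_inter_preimage unitDisk_open (isOpen_Ioi (a := (0:ℝ)))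
  have hΩopen : IsOpen Ω := by
    have h1 : Ω = ({w : ℂ | ‖w‖ < r} ∩ {(0:ℂ)}ᶜ)
        ∩ {w : ℂ | w ∈ unitDisk ∧ 0 < lam w} := by
      ext w
      constructor
      · rintro ⟨ha, hb, hc⟩
        exact ⟨⟨ha, hb⟩, ⟨lt_trans ha hr1, hc⟩⟩
      · rintro ⟨⟨ha, hb⟩, _, hc⟩
        exact ⟨ha, hb, hc⟩
    rw [h1]
    exact ((isOpen_lt continuous_norm continuous_const).inter
      isOpen_compl_singleton).inter hposopen
  have hzΩ : z ∈ Ω := ⟨hzr, hz0, hlamneg⟩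
  have hlamC2 : ∀ w ∈ Ω, ContDiffAt ℝ 2 lam w := by
    intro w hw
    exact hconf.smooth.contDiffAt (hposopen.mem_nhds ⟨lt_trans hw.1 hr1, hw.2.2⟩)
  have hFC2 : ∀ w ∈ Ω, ContDiffAt ℝ 2 F w := by
    intro w hw
    have h1 : ContDiffAt ℝ 2 (fun v => Real.log (lam v)) w :=
      (hlamC2 w hw).log hw.2.2.ne'
    have h2 : ContDiffAt ℝ 2 (fun v => Real.log (nuF β r v)) w :=
      contDiffAt_log_nuF hβ hr0 hw.2.1 hw.1
    have h3 : ContDiffAt ℝ 2 (fun v => Real.log (‖v‖)) w :=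
      contDiffAt_log_abs hw.2.1
    rw [hFdef]
    exact (h1.sub h2).add (contDiffAt_const.mul h3)
  -- the candidate max set S
  set S : Set ℂ := {w | w ∈ Ω ∧ F z ≤ F w} with hSdef
  have hSz : z ∈ S := ⟨hzΩ, le_refl _⟩
  have hSsubΩ : S ⊆ Ω := fun w hw => hw.1
  have hSball : S ⊆ Metric.closedBall 0 r := by
    intro w hw
    rw [mem_closedBall_zero_iff]
    exact le_of_lt hw.1.1
  -- the uniform bound on lam
  obtain ⟨M, hMpos, hM⟩ : ∃ M : ℝ, 0 < M ∧ ∀ w : ℂ, ‖w‖ ≤ r → lam w ≤ M := by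
    have hK : IsCompact (Metric.closedBall (0:ℂ) r) := isCompact_closedBall 0 r
    have hKD : Metric.closedBall (0:ℂ) r ⊆ unitDisk := by
      intro w hw
      rw [mem_closedBall_zero_iff] at hw
      exact lt_of_le_of_lt hw hr1
    obtain ⟨M0, hM0⟩ := hK.bddAbove_image (hconf.cont.mono hKD)
    refine ⟨max M0 1, lt_of_lt_of_le one_pos (le_max_right _ _), ?_⟩
    intro w hw
    have hwK : w ∈ Metric.closedBall (0:ℂ) r := by
      rw [mem_closedBall_zero_iff]; exact hw
    exact le_trans (hM0 (Set.mem_image_of_mem lam hwK)) (le_max_left _ _)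
  -- the boundary estimates
  have hbadcases : ∀ w : ℂ, ‖w‖ ≤ r → w ∉ Ω →
      ∀ᶠ v in 𝓝[Ω] w, F v < F z := by
    intro w hwr hwn
    by_cases hw0 : w = 0
    · -- Case A : w = 0
      subst hw0
      have hlog_atBot : Tendsto (fun v : ℂ => Real.log (‖v‖))
          (𝓝[≠] (0:ℂ)) atBot := by
        have habs : Tendsto (fun v : ℂ => ‖v‖) (𝓝[≠] (0:ℂ)) (𝓝[≠] (0:ℝ)) := by
          rw [tendsto_nhdsWithin_iff]
          constructor
          · have h := continuous_norm.tendsto (0:ℂ)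
            simp only [norm_zero] at h
            exact h.mono_left nhdsWithin_le_nhds
          · filter_upwards [self_mem_nhdsWithin] with v hv
            simp only [Set.mem_compl_iff, Set.mem_singleton_iff] at hv ⊢
            exact (norm_pos_iff.mpr hv).ne'
        exact Real.tendsto_log_nhdsNE_zero.comp habs
      set K2 : ℝ := (1+β) * r^(1+β) / r^(2*(1+β)) with hK2def
      have hrp1 : (0:ℝ) < r^(1+β) := Real.rpow_pos_of_pos hr0 _
      have hrp2 : (0:ℝ) < r^(2*(1+β)) := Real.rpow_pos_of_pos hr0 _
      have hK2 : 0 < K2 := by rw [hK2def]; positivity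
      set C : ℝ := Real.log (L+1) - Real.log K2 with hCdef
      have hevlt : ∀ᶠ v in 𝓝[≠] (0:ℂ), δ * Real.log (‖v‖) < F z - C := by
        filter_upwards [hlog_atBot.eventually (eventually_lt_atBot ((F z - C)/δ))] with v hv
        calc δ * Real.log (‖v‖) < δ * ((F z - C)/δ) :=
              mul_lt_mul_of_pos_left hv hδ
          _ = F z - C := by field_simp
      have hevlam : ∀ᶠ v in 𝓝[≠] (0:ℂ), lam v / ‖v‖ ^ β < L + 1 := by
        have h := hLlim.eventually_lt_const (show L < L+1 by linarith)
        simpa [sub_zero] using h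
      have hmono : 𝓝[Ω] (0:ℂ) ≤ 𝓝[≠] (0:ℂ) :=
        nhdsWithin_mono _ (fun v hv => hv.2.1)
      filter_upwards [hmono hevlt, hmono hevlam, self_mem_nhdsWithin]
        with v h1 h2 hvΩ
      obtain ⟨hvr, hv0, hvpos⟩ := hvΩ
      have hvabs : 0 < ‖v‖ := norm_pos_iff.mpr hv0
      have hvb : 0 < ‖v‖ ^ β := Real.rpow_pos_of_pos hvabs β
      have e1 : lam v ≤ (L+1) * ‖v‖ ^ β := by
        rw [div_lt_iff₀ hvb] at h2; linarith
      have e2 : Real.log (lam v) ≤ Real.log (L+1) + β * Real.log (‖v‖) := by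
        calc Real.log (lam v) ≤ Real.log ((L+1) * ‖v‖ ^ β) :=
              Real.log_le_log hvpos e1
          _ = Real.log (L+1) + β * Real.log (‖v‖) := by
              rw [Real.log_mul (by linarith) hvb.ne', Real.log_rpow hvabs]
      have e3 : K2 * ‖v‖ ^ β ≤ nuF β r v := by
        have hD : 0 < r^(2*(1+β)) - ‖v‖ ^ (2*(1+β)) :=
          sub_pos.mpr (nuF_denom_pos hβ hr0 hvr)
        have hDle : r^(2*(1+β)) - ‖v‖ ^ (2*(1+β)) ≤ r^(2*(1+β)) := by
          have := Real.rpow_nonneg (norm_nonneg v) (2*(1+β)); linarith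
        have hNpos : (0:ℝ) ≤ (1+β) * ‖v‖ ^ β * r^(1+β) := by positivity
        calc K2 * ‖v‖ ^ β
            = (1+β) * ‖v‖ ^ β * r^(1+β) / r^(2*(1+β)) := by
              rw [hK2def]; ring
          _ ≤ (1+β) * ‖v‖ ^ β * r^(1+β)
              / (r^(2*(1+β)) - ‖v‖ ^ (2*(1+β))) := by gcongr
          _ = nuF β r v := by rw [nuF]
      have e4 : Real.log K2 + β * Real.log (‖v‖) ≤ Real.log (nuF β r v) := by
        calc Real.log K2 + β * Real.log (‖v‖)
            = Real.log (K2 * ‖v‖ ^ β) := by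
              rw [Real.log_mul hK2.ne' hvb.ne', Real.log_rpow hvabs]
          _ ≤ Real.log (nuF β r v) := Real.log_le_log (by positivity) e3
      have e5 : F v ≤ C + δ * Real.log (‖v‖) := by
        have hFv : F v = Real.log (lam v) - Real.log (nuF β r v)
            + δ * Real.log (‖v‖) := by simp only [hFdef]
        rw [hFv, hCdef]; linarith
      linarith
    · by_cases hwlt : ‖w‖ < r
      · -- Case C : lam w = 0
        have hw𝔻 : w ∈ unitDisk := lt_trans hwlt hr1
        have hlamw : lam w = 0 := by
          have h1 : ¬ 0 < lam w := fun hh => hwn ⟨hwlt, hw0, hh⟩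
          have h2 : 0 ≤ lam w := hconf.nonneg w hw𝔻
          linarith [not_lt.mp h1]
        have hcnu : ContinuousAt (fun v => Real.log (nuF β r v)) w :=
          (contDiffAt_log_nuF hβ hr0 hw0 hwlt (n := 1)).continuousAt
        have hcabs : ContinuousAt (fun v => Real.log (‖v‖)) w :=
          (contDiffAt_log_abs hw0 (n := 1)).continuousAt
        have hrest : Tendsto (fun v => -Real.log (nuF β r v) + δ * Real.log (‖v‖))
            (𝓝[Ω] w) (𝓝 (-Real.log (nuF β r w) + δ * Real.log (‖w‖))) :=
          ((hcnu.neg.add (continuousAt_const.mul hcabs)).continuousWithinAt)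
        have hlamt : Tendsto lam (𝓝[Ω] w) (𝓝[>] (0:ℝ)) := by
          rw [tendsto_nhdsWithin_iff]
          constructor
          · have hcl : ContinuousAt lam w :=
              hconf.cont.continuousAt (unitDisk_open.mem_nhds hw𝔻)
            have h : Tendsto lam (𝓝[Ω] w) (𝓝 (lam w)) :=
              hcl.continuousWithinAt (s := Ω)
            rwa [hlamw] at h
          · filter_upwards [self_mem_nhdsWithin] with v hv
            exact hv.2.2
        have hloglam : Tendsto (fun v => Real.log (lam v)) (𝓝[Ω] w) atBot := by
          apply Real.tendsto_log_nhdsNE_zero.comp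
          exact hlamt.mono_right (nhdsWithin_mono _ (fun x hx => ne_of_gt hx))
        have hsum : Tendsto F (𝓝[Ω] w) atBot := by
          have hFeq : F = fun v => (-Real.log (nuF β r v) + δ * Real.log (‖v‖))
              + Real.log (lam v) := by
            funext v; simp only [hFdef]; ring
          rw [hFeq]
          exact hrest.add_atBot hloglam
        exact hsum.eventually (eventually_lt_atBot (F z))
      · -- Case B : |w| = r
        have hwr' : ‖w‖ = r := le_antisymm hwr (not_lt.mp hwlt)
        have hdent : Tendsto (fun v : ℂ => r^(2*(1+β)) - ‖v‖ ^ (2*(1+β)))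
            (𝓝[Ω] w) (𝓝[>] (0:ℝ)) := by
          rw [tendsto_nhdsWithin_iff]
          constructor
          · have hc : ContinuousAt (fun v : ℂ => r^(2*(1+β)) - ‖v‖ ^ (2*(1+β))) w :=
              continuousAt_const.sub
                ((Real.continuousAt_rpow_const _ _ (Or.inr (by linarith : (0:ℝ) ≤ 2*(1+β)))).comp
                  continuous_norm.continuousAt)
            have h0 : r^(2*(1+β)) - ‖w‖ ^ (2*(1+β)) = 0 := by rw [hwr']; ring
            have h : Tendsto (fun v : ℂ => r^(2*(1+β)) - ‖v‖ ^ (2*(1+β)))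
                (𝓝[Ω] w) (𝓝 (r^(2*(1+β)) - ‖w‖ ^ (2*(1+β)))) :=
              hc.continuousWithinAt (s := Ω)
            rwa [h0] at h
          · filter_upwards [self_mem_nhdsWithin] with v hv
            exact sub_pos.mpr (nuF_denom_pos hβ hr0 hv.1)
        have hinv : Tendsto (fun v : ℂ => (r^(2*(1+β)) - ‖v‖ ^ (2*(1+β)))⁻¹)
            (𝓝[Ω] w) atTop := tendsto_inv_nhdsGT_zero.comp hdent
        have hnumt : Tendsto (fun v : ℂ => (1+β) * ‖v‖ ^ β * r^(1+β))
            (𝓝[Ω] w) (𝓝 ((1+β) * r ^ β * r^(1+β))) := by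
          have hc : ContinuousAt (fun v : ℂ => (1+β) * ‖v‖ ^ β * r^(1+β)) w :=
            (continuousAt_const.mul
              ((Real.continuousAt_rpow_const _ _ (Or.inr hβ.le)).comp
                continuous_norm.continuousAt)).mul continuousAt_const
          have h : Tendsto (fun v : ℂ => (1+β) * ‖v‖ ^ β * r^(1+β))
              (𝓝[Ω] w) (𝓝 ((1+β) * ‖w‖ ^ β * r^(1+β))) :=
            hc.continuousWithinAt (s := Ω)
          rwa [hwr'] at h
        have hnut : Tendsto (fun v => nuF β r v) (𝓝[Ω] w) atTop := by
          have heq : (fun v => nuF β r v) = fun v : ℂ =>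
              (1+β) * ‖v‖ ^ β * r^(1+β)
                * (r^(2*(1+β)) - ‖v‖ ^ (2*(1+β)))⁻¹ := by
            funext v; rw [nuF, div_eq_mul_inv]
          rw [heq]
          apply Filter.Tendsto.pos_mul_atTop ?_ hnumt hinv
          have h1 : (0:ℝ) < r ^ β := Real.rpow_pos_of_pos hr0 _
          have h2 : (0:ℝ) < r ^ (1+β) := Real.rpow_pos_of_pos hr0 _
          positivity
        have hlognut : Tendsto (fun v => Real.log (nuF β r v)) (𝓝[Ω] w) atTop :=
          Real.tendsto_log_atTop.comp hnut
        filter_upwards [hlognut.eventually (eventually_gt_atTop (Real.log M - F z)),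
          self_mem_nhdsWithin] with v hlg hvΩ
        obtain ⟨hvr, hv0, hvpos⟩ := hvΩ
        have b1 : Real.log (lam v) ≤ Real.log M := Real.log_le_log hvpos (hM v (le_of_lt hvr))
        have hlogle : Real.log (‖v‖) ≤ 0 :=
          Real.log_nonpos (norm_nonneg v) (le_of_lt (lt_trans hvr hr1))
        have b2 : δ * Real.log (‖v‖) ≤ 0 := mul_nonpos_iff.mpr (Or.inl ⟨hδ.le, hlogle⟩)
        have hFv : F v = Real.log (lam v) - Real.log (nuF β r v)
            + δ * Real.log (‖v‖) := by simp only [hFdef]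
        rw [hFv]; linarith
  -- S is closed, hence compact
  have hSclosed : IsClosed S := by
    apply isClosed_of_closure_subset
    intro w hw
    haveI hne : (𝓝[S] w).NeBot := mem_closure_iff_nhdsWithin_neBot.mp hw
    have hwr : ‖w‖ ≤ r := by
      have h := (Metric.isClosed_closedBall (x := (0:ℂ)) (ε := r)).closure_subset_iff.mpr hSball hw
      rwa [mem_closedBall_zero_iff] at h
    have hwΩ : w ∈ Ω := by
      by_contra hwn
      have hbad' : ∀ᶠ v in 𝓝[S] w, F v < F z :=
        (hbadcases w hwr hwn).filter_mono (nhdsWithin_mono w hSsubΩ)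
      have hub : ∀ᶠ v in 𝓝[S] w, F z ≤ F v :=
        eventually_nhdsWithin_of_forall (fun v hv => hv.2)
      obtain ⟨v, hv1, hv2⟩ := (hbad'.and hub).exists
      linarith
    refine ⟨hwΩ, ?_⟩
    have hcw : ContinuousWithinAt F S w := ((hFC2 w hwΩ).continuousAt).continuousWithinAt
    exact ge_of_tendsto hcw (eventually_nhdsWithin_of_forall (fun v hv => hv.2))
  have hScomp : IsCompact S :=
    Metric.isCompact_of_isClosed_isBounded hSclosed
      (Metric.isBounded_closedBall.subset hSball)
  have hFcont : ContinuousOn F S :=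
    fun w hw => ((hFC2 w (hSsubΩ hw)).continuousAt).continuousWithinAt
  obtain ⟨z₁, hz₁S, hz₁max⟩ := hScomp.exists_isMaxOn ⟨z, hSz⟩ hFcont
  have hz₁Ω : z₁ ∈ Ω := hSsubΩ hz₁S
  have hloc : IsLocalMax F z₁ := by
    filter_upwards [hΩopen.mem_nhds hz₁Ω] with v hv
    by_cases hvS : v ∈ S
    · exact hz₁max hvS
    · have h1 : ¬ (F z ≤ F v) := fun hh => hvS ⟨hv, hh⟩
      push_neg at h1
      exact le_trans h1.le hz₁S.2
  obtain ⟨hz₁r, hz₁0, hz₁pos⟩ := hz₁Ω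
  have hz₁D : z₁ ∈ unitDisk := lt_trans hz₁r hr1
  have hnu₁ : 0 < nuF β r z₁ := nuF_pos hβ hr0 hz₁0 hz₁r
  have hFz₁ : 0 < F z₁ := lt_of_lt_of_le hFz hz₁S.2
  have hlogz₁ : Real.log (‖z₁‖) ≤ 0 :=
    Real.log_nonpos (norm_nonneg z₁) (le_of_lt (lt_trans hz₁r hr1))
  have hdlog : δ * Real.log (‖z₁‖) ≤ 0 :=
    mul_nonpos_iff.mpr (Or.inl ⟨hδ.le, hlogz₁⟩)
  have hlamgt : nuF β r z₁ < lam z₁ := by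
    have hFv : F z₁ = Real.log (lam z₁) - Real.log (nuF β r z₁)
        + δ * Real.log (‖z₁‖) := by simp only [hFdef]
    have h1 : Real.log (nuF β r z₁) < Real.log (lam z₁) := by linarith
    exact (Real.log_lt_log_iff hnu₁ hz₁pos).mp h1
  have hlapF : lap F z₁ = lap (fun w => Real.log (lam w)) z₁
      - lap (fun w => Real.log (nuF β r w)) z₁
      + δ * lap (fun w => Real.log (‖w‖)) z₁ := by
    rw [hFdef]
    exact lap_combo ((hlamC2 z₁ ⟨hz₁r, hz₁0, hz₁pos⟩).log hz₁pos.ne')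
      (contDiffAt_log_nuF hβ hr0 hz₁0 hz₁r) (contDiffAt_log_abs hz₁0)
  have hcurv₁ := curv_le_lap hz₁pos (hcurv z₁ hz₁D hz₁pos)
  have hlapnu := lap_log_nuF hβ hr0 hz₁0 hz₁r
  have hlapabs := lap_log_abs hz₁0
  have hsq : nuF β r z₁ ^ 2 < lam z₁ ^ 2 := by nlinarith
  have hlappos : 0 < lap F z₁ := by
    rw [hlapF, hlapnu, hlapabs]
    nlinarith
  have hnonpos := lap_nonpos_of_isLocalMax (hFC2 z₁ ⟨hz₁r, hz₁0, hz₁pos⟩) hloc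
  linarith

/-- **Maximality of `μ_β`.**  For `β > 0`, `μ_β(z) = (1+β)|z|^β/(1-|z|^{2(1+β)})` is a
conformal pseudometric on `𝔻` with constant curvature `-4` and an isolated zero of order
`β` at `0`, and every conformal pseudometric `λ` on `𝔻` with `κ_λ ≤ -4` and a zero of
order `β` at `0` satisfies `λ ≤ μ_β` on `𝔻`. -/
theorem muBeta_maximal (β : ℝ) (hβ : 0 < β) :
    IsConfPseudometric (muBeta β) ∧
    (∀ z ∈ unitDisk, z ≠ 0 → 0 < muBeta β z ∧ curv (muBeta β) z = -4) ∧
    HasZeroOrder (muBeta β) 0 β ∧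
    ∀ lam : ℂ → ℝ, IsConfPseudometric lam →
      (∀ z ∈ unitDisk, 0 < lam z → curv lam z ≤ -4) →
      HasZeroOrder lam 0 β →
      ∀ z ∈ unitDisk, lam z ≤ muBeta β z := by
  refine ⟨muBeta_conf hβ, ?_, muBeta_order hβ,
    fun lam hconf hcurv hord => maximality hβ lam hconf hcurv hord⟩
  intro z hz hz0
  exact muBeta_pos_curv hβ hz hz0
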